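/- Let P be a poset and X a coherent finite cutset of P. Then the opposite of the crosscut poset Γ(P,X) is isomorphic to a strong deformation retract of the poset of simplices of the crosscut complex Γ_C(P,X); concretely, the maps ν(σ) = st(σ) and ι(C) = I_X(C) satisfy ν∘ι = id on Γ(P,X)^op and ι∘ν ≥ id on the simplex poset of Γ_C(P,X). -/

import Mathlib

/-- The star of an element: all elements comparable to `a`. -/
def starOf {α : Type*} [PartialOrder α] (a : α) : Set α := {x | x ≤ a ∨ a ≤ x}

/-- The star of a subset: elements comparable to every element of `A`. -/
def starSetOf {α : Type*} [PartialOrder α] (A : Set α) : Set α := ⋂ a ∈ A, starOf a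

/-- A subset is astral if it is contained in the star of some element. -/
def IsAstral {α : Type*} [PartialOrder α] (A : Set α) : Prop := ∃ x : α, A ⊆ starOf x

/-- One step of the comparability relation inside a subposet `S`. -/
def CompStep {α : Type*} [PartialOrder α] (S : Set α) (x y : α) : Prop :=
  x ∈ S ∧ y ∈ S ∧ (x ≤ y ∨ y ≤ x)

/-- `x` and `y` are connected inside the subposet `S`. -/
def ConnIn {α : Type*} [PartialOrder α] (S : Set α) (x y : α) : Prop :=
  Relation.ReflTransGen (CompStep S) x y

/-- A subposet is connected (as a subposet, via comparability). -/
def IsConnSub {α : Type*} [PartialOrder α] (S : Set α) : Prop :=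
  S.Nonempty ∧ ∀ x ∈ S, ∀ y ∈ S, ConnIn S x y

/-- The connected component of `x` in the subposet `S`. -/
def compOf {α : Type*} [PartialOrder α] (S : Set α) (x : α) : Set α :=
  {y | y ∈ S ∧ ConnIn S x y}

/-- `C` is a connected component of the subposet `S`. -/
def IsCompOf {α : Type*} [PartialOrder α] (S C : Set α) : Prop :=
  ∃ x ∈ S, C = compOf S x

/-- The crosscut poset `Γ(P,X)`: connected components of the nonempty `st(A)`, `∅ ≠ A ⊆ X`. -/
def crosscutPoset {α : Type*} [PartialOrder α] (X : Set α) : Set (Set α) :=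
  {C | ∃ A : Set α, A.Nonempty ∧ A ⊆ X ∧ IsCompOf (starSetOf A) C}

/-- The subposet `Γ_f(P,X)` coming from finite subsets `A ⊆ X`. -/
def crosscutPosetF {α : Type*} [PartialOrder α] (X : Set α) : Set (Set α) :=
  {C | ∃ A : Set α, A.Nonempty ∧ A.Finite ∧ A ⊆ X ∧ IsCompOf (starSetOf A) C}

/-- `X` is a cutset: every finite chain extends to a chain by an element of `X`. -/
def IsCutset {α : Type*} [PartialOrder α] (X : Set α) : Prop :=
  ∀ σ : Set α, σ.Finite → IsChain (· ≤ ·) σ → ∃ a ∈ X, IsChain (· ≤ ·) (insert a σ)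

/-- A subset `X` is coherent: every finite nonempty bounded subset of `X` has a meet or a join. -/
def IsCoherent {α : Type*} [PartialOrder α] (X : Set α) : Prop :=
  ∀ A ⊆ X, A.Finite → A.Nonempty → (BddAbove A ∨ BddBelow A) →
    (∃ z, IsGLB A z) ∨ (∃ z, IsLUB A z)

/-- The simplices of the crosscut complex `Γ_C(P,X)`: nonempty finite astral subsets of `X`. -/
def IsCCSimplex {α : Type*} [PartialOrder α] (X σ : Set α) : Prop :=
  σ ⊆ X ∧ σ.Finite ∧ σ.Nonempty ∧ IsAstral σ

/-- `I_X(D) = {x ∈ X | D ⊆ st(x)}`. -/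
def astralIdx {α : Type*} [PartialOrder α] (X D : Set α) : Set α :=
  {x ∈ X | D ⊆ starOf x}

/-- The set of maximal elements of a poset. -/
def mxlSet (α : Type*) [PartialOrder α] : Set α := {a | ∀ b, a ≤ b → b = a}

/-- The set of minimal elements of a poset. -/
def mnlSet (α : Type*) [PartialOrder α] : Set α := {a | ∀ b, b ≤ a → b = a}

/-- Type synonym carrying the Alexandroff topology (down-sets are open) of a preorder. -/
def AlexSp (β : Type*) := β

instance {β : Type*} [Preorder β] : Preorder (AlexSp β) := inferInstanceAs (Preorder β)
instance {β : Type*} [PartialOrder β] : PartialOrder (AlexSp β) :=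
  inferInstanceAs (PartialOrder β)

instance {β : Type*} [Preorder β] : TopologicalSpace (AlexSp β) where
  IsOpen U := IsLowerSet U
  isOpen_univ := isLowerSet_univ
  isOpen_inter _ _ h₁ h₂ := h₁.inter h₂
  isOpen_sUnion _ h := isLowerSet_sUnion h


section StmtNineAux

variable {α : Type*} [PartialOrder α]

lemma stmt9_mem_starSetOf {A : Set α} {y : α} :
    y ∈ starSetOf A ↔ ∀ a ∈ A, y ≤ a ∨ a ≤ y := by
  simp [starSetOf, starOf]

lemma stmt9_connIn_step {S : Set α} {y w : α} (hy : y ∈ S) (hw : w ∈ S)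
    (h : y ≤ w ∨ w ≤ y) : ConnIn S y w :=
  Relation.ReflTransGen.single ⟨hy, hw, h⟩

lemma stmt9_conn_starSetOf {X σ : Set α} (hcoh : IsCoherent X) (hσX : σ ⊆ X)
    (hfin : σ.Finite) (hne : σ.Nonempty) :
    ∀ y ∈ starSetOf σ, ∀ z ∈ starSetOf σ, ConnIn (starSetOf σ) y z := by
  intro y hy z hz
  by_cases hc : y ≤ z ∨ z ≤ y
  · exact stmt9_connIn_step hy hz hc
  push_neg at hc
  obtain ⟨hyz, hzy⟩ := hc
  have hDeq : ∀ a ∈ σ, a ≤ y → a ≤ z := by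
    intro a ha hay
    rcases stmt9_mem_starSetOf.mp hz a ha with h | h
    · exact absurd (h.trans hay) hzy
    · exact h
  have hUeq : ∀ a ∈ σ, y ≤ a → z ≤ a := by
    intro a ha hya
    rcases stmt9_mem_starSetOf.mp hz a ha with h | h
    · exact h
    · exact absurd (hya.trans h) hyz
  obtain ⟨a₀, ha₀⟩ := hne
  have hpath : ∀ w ∈ starSetOf σ, (y ≤ w ∨ w ≤ y) → (z ≤ w ∨ w ≤ z) →
      ConnIn (starSetOf σ) y z := by
    intro w hw h1 h2
    exact (stmt9_connIn_step hy hw h1).trans (stmt9_connIn_step hw hz (h2.symm.imp id id))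
  rcases stmt9_mem_starSetOf.mp hy a₀ ha₀ with hya | hay
  · set U : Set α := {a ∈ σ | y ≤ a} with hU
    have hUne : U.Nonempty := ⟨a₀, ha₀, hya⟩
    have hUbdd : BddBelow U := ⟨y, fun a ha => ha.2⟩
    rcases hcoh U (fun a ha => hσX ha.1) (hfin.subset (fun a ha => ha.1)) hUne
        (Or.inr hUbdd) with ⟨g, hg⟩ | ⟨s, hs⟩
    · have hyg : y ≤ g := hg.2 (fun a ha => ha.2)
      have hzg : z ≤ g := hg.2 (fun a ha => hUeq a ha.1 ha.2)
      have hgst : g ∈ starSetOf σ := by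
        rw [stmt9_mem_starSetOf]
        intro a ha
        rcases stmt9_mem_starSetOf.mp hy a ha with h | h
        · exact Or.inl (hg.1 ⟨ha, h⟩)
        · exact Or.inr (h.trans hyg)
      exact hpath g hgst (Or.inl hyg) (Or.inl hzg)
    · obtain ⟨b, hb⟩ := hUne
      have hys : y ≤ s := hb.2.trans (hs.1 hb)
      have hzs : z ≤ s := (hUeq b hb.1 hb.2).trans (hs.1 hb)
      have hsst : s ∈ starSetOf σ := by
        rw [stmt9_mem_starSetOf]
        intro a ha
        rcases stmt9_mem_starSetOf.mp hy a ha with h | h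
        · exact Or.inr (hs.1 ⟨ha, h⟩)
        · exact Or.inr (h.trans hys)
      exact hpath s hsst (Or.inl hys) (Or.inl hzs)
  · set D : Set α := {a ∈ σ | a ≤ y} with hD
    have hDne : D.Nonempty := ⟨a₀, ha₀, hay⟩
    have hDbdd : BddAbove D := ⟨y, fun a ha => ha.2⟩
    rcases hcoh D (fun a ha => hσX ha.1) (hfin.subset (fun a ha => ha.1)) hDne
        (Or.inl hDbdd) with ⟨g, hg⟩ | ⟨m, hm⟩
    · obtain ⟨b, hb⟩ := hDne
      have hgy : g ≤ y := (hg.1 hb).trans hb.2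
      have hgz : g ≤ z := (hg.1 hb).trans (hDeq b hb.1 hb.2)
      have hgst : g ∈ starSetOf σ := by
        rw [stmt9_mem_starSetOf]
        intro a ha
        rcases stmt9_mem_starSetOf.mp hy a ha with h | h
        · exact Or.inl (hgy.trans h)
        · exact Or.inl (hg.1 ⟨ha, h⟩)
      exact hpath g hgst (Or.inr hgy) (Or.inr hgz)
    · have hmy : m ≤ y := hm.2 (fun a ha => ha.2)
      have hmz : m ≤ z := hm.2 (fun a ha => hDeq a ha.1 ha.2)
      have hmst : m ∈ starSetOf σ := by
        rw [stmt9_mem_starSetOf]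
        intro a ha
        rcases stmt9_mem_starSetOf.mp hy a ha with h | h
        · exact Or.inl (hmy.trans h)
        · exact Or.inr (hm.1 ⟨ha, h⟩)
      exact hpath m hmst (Or.inr hmy) (Or.inr hmz)

lemma stmt9_starSetOf_anti {A B : Set α} (h : A ⊆ B) : starSetOf B ⊆ starSetOf A := by
  intro y hy
  rw [stmt9_mem_starSetOf] at *
  exact fun a ha => hy a (h ha)

lemma stmt9_connIn_mono {S T : Set α} (h : S ⊆ T) {x y : α} (hc : ConnIn S x y) :
    ConnIn T x y :=
  Relation.ReflTransGen.mono (r := CompStep S) (p := CompStep T)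
    (fun _ _ hs => ⟨h hs.1, h hs.2.1, hs.2.2⟩) x y hc

end StmtNineAux

/-- For a coherent finite cutset `X`, the maps `ν(σ) = st(σ)` and `ι(C) = I_X(C)` exhibit
`Γ(P,X)ᵒᵖ` as (isomorphic to) a strong deformation retract of the simplex poset of
`Γ_C(P,X)`: `ν` and `ι` are well defined, `ν ∘ ι = id` and `ι ∘ ν ≥ id`. -/
theorem stmt_9 {α : Type*} [PartialOrder α] {X : Set α}
    (hXfin : X.Finite) (hcut : IsCutset X) (hcoh : IsCoherent X) :
    (∀ σ, IsCCSimplex X σ → starSetOf σ ∈ crosscutPoset X) ∧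
      (∀ C ∈ crosscutPoset X, IsCCSimplex X (astralIdx X C) ∧ starSetOf (astralIdx X C) = C) ∧
      (∀ σ, IsCCSimplex X σ → σ ⊆ astralIdx X (starSetOf σ)) := by
  refine ⟨?_, ?_, ?_⟩
  · -- ν is well defined
    rintro σ ⟨hσX, hfin, hne, x, hxst⟩
    have hx : x ∈ starSetOf σ := by
      rw [stmt9_mem_starSetOf]
      intro a ha
      exact (hxst ha).symm.imp id id
    refine ⟨σ, hne, hσX, x, hx, ?_⟩
    ext y
    constructor
    · intro hy
      exact ⟨hy, stmt9_conn_starSetOf hcoh hσX hfin hne x hx y hy⟩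
    · exact fun hy => hy.1
  · -- ι is well defined and ν ∘ ι = id
    rintro C ⟨A, hAne, hAX, x₀, hx₀, hCeq⟩
    have hx₀C : x₀ ∈ C := by
      rw [hCeq]; exact ⟨hx₀, Relation.ReflTransGen.refl⟩
    have hCsub : C ⊆ starSetOf A := by
      intro y hy; rw [hCeq] at hy; exact hy.1
    have hAI : A ⊆ astralIdx X C := by
      intro a ha
      refine ⟨hAX ha, fun y hy => ?_⟩
      have := stmt9_mem_starSetOf.mp (hCsub hy) a ha
      exact this
    set I : Set α := astralIdx X C with hI
    have hIX : I ⊆ X := fun x hx => hx.1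
    have hIfin : I.Finite := hXfin.subset hIX
    have hIne : I.Nonempty := hAne.mono hAI
    have hIastral : IsAstral I := by
      refine ⟨x₀, fun x hx => ?_⟩
      exact (hx.2 hx₀C).symm.imp id id
    have hCstI : C ⊆ starSetOf I := by
      intro y hy
      rw [stmt9_mem_starSetOf]
      intro x hx
      exact hx.2 hy
    have hstIC : starSetOf I ⊆ C := by
      intro y hy
      have hconn : ConnIn (starSetOf I) x₀ y :=
        stmt9_conn_starSetOf hcoh hIX hIfin hIne x₀ (hCstI hx₀C) y hy
      have hsub : starSetOf I ⊆ starSetOf A := stmt9_starSetOf_anti hAI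
      rw [hCeq]
      exact ⟨hsub hy, stmt9_connIn_mono hsub hconn⟩
    exact ⟨⟨hIX, hIfin, hIne, hIastral⟩, le_antisymm hstIC hCstI⟩
  · -- ι ∘ ν ≥ id
    rintro σ ⟨hσX, hfin, hne, hast⟩ a ha
    refine ⟨hσX ha, fun y hy => ?_⟩
    exact stmt9_mem_starSetOf.mp hy a ha
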